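/- Let l = 1+Σlᵢxᵢ and g = 1+Σgᵢxᵢ be affine linear forms, Λ ∈ R* with I_Λ zero-dimensional, and Γ ∈ R* with Γ ∈ I_Λ^⊥ and Γ = 𝟙_l + (1/d)·𝟙_l ∘ Σᵢ(gᵢ−lᵢ)∂ᵢ. Then for each index j: if gⱼ = lⱼ, Γ is an eigenvector of M_{xⱼ}^t with eigenvalue lⱼ; if gⱼ ≠ lⱼ, Γ is a rank-2 generalized eigenvector of M_{xⱼ}^t with eigenvalue lⱼ, and (M_{xⱼ}^t − lⱼ)(Γ) is a nonzero multiple of 𝟙_l. Precisely, M_{xⱼ}^t Γ = lⱼ·Γ + ((gⱼ−lⱼ)/d)·𝟙_l. -/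
import Mathlib


open MvPolynomial

noncomputable section

variable {k : Type*}

def hankelKer [Field k] {n : ℕ} (Λ : Module.Dual k (MvPolynomial (Fin n) k)) :
    Ideal (MvPolynomial (Fin n) k) where
  carrier := {f | ∀ g, Λ (f * g) = 0}
  zero_mem' := by intro g; simp
  add_mem' := by
    intro a b ha hb g
    rw [add_mul, map_add, ha g, hb g, add_zero]
  smul_mem' := by
    intro c f hf g
    simp only [smul_eq_mul, Set.mem_setOf_eq] at *
    rw [mul_comm c f, mul_assoc]
    exact hf _

def evalDual [CommSemiring k] {n : ℕ} (ζ : Fin n → k) :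
    Module.Dual k (MvPolynomial (Fin n) k) := (aeval ζ).toLinearMap

def Mt [CommSemiring k] {n : ℕ} (a : MvPolynomial (Fin n) k) :
    Module.End k (Module.Dual k (MvPolynomial (Fin n) k)) :=
  LinearMap.lcomp k k (LinearMap.mulLeft k a)


lemma Mt_evalDual_aux [Field k] {n : ℕ} (a : Fin n → k) (j : Fin n) :
    Mt (X j) (evalDual a) = a j • evalDual a := by
  refine LinearMap.ext fun f => ?_
  simp [Mt, evalDual, mul_comm]

lemma key_aux [Field k] [CharZero k] {n d : ℕ} (hd : 1 ≤ d) (a b : Fin n → k)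
    (Γ : Module.Dual k (MvPolynomial (Fin n) k))
    (hΓ : Γ = evalDual a + (d : k)⁻¹ •
        ∑ i, (b i - a i) • (evalDual a ∘ₗ (pderiv i).toLinearMap)) (j : Fin n) :
    Mt (X j) Γ = a j • Γ + ((b j - a j) / (d : k)) • evalDual a := by
  have hd0 : (d : k) ≠ 0 := Nat.cast_ne_zero.mpr (by omega)
  refine LinearMap.ext fun f => ?_
  have hder : ∀ i, aeval a (pderiv i (X j * f)) =
      (if i = j then aeval a f else 0) + a j * aeval a (pderiv i f) := by
    intro i
    rw [pderiv_mul, pderiv_X]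
    rcases eq_or_ne i j with h | h <;> simp [h, Pi.single_apply]
  simp only [hΓ, Mt, evalDual, LinearMap.lcomp_apply, LinearMap.mulLeft_apply,
    LinearMap.add_apply, LinearMap.smul_apply, LinearMap.sum_apply,
    LinearMap.coe_comp, Function.comp_apply, AlgHom.toLinearMap_apply,
    Derivation.coeFn_coe, smul_eq_mul, map_mul, aeval_X]
  rw [Finset.mul_sum, Finset.mul_sum]
  simp only [hder]
  rw [Finset.sum_congr rfl (fun i _ => by split_ifs <;> ring :
    ∀ i ∈ Finset.univ, (d:k)⁻¹ * ((b i - a i) * ((if i = j then aeval a f else 0) + a j * aeval a (pderiv i f)))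
      = (if i = j then (d:k)⁻¹ * (b i - a i) * aeval a f else 0) + a j * ((d:k)⁻¹ * ((b i - a i) * aeval a (pderiv i f))))]
  rw [Finset.sum_add_distrib, Finset.sum_ite_eq' Finset.univ j
    (fun i => (d:k)⁻¹ * (b i - a i) * aeval a f)]
  simp only [Finset.mem_univ, if_true, ← Finset.mul_sum]
  field_simp
  ring

theorem stmt13 [Field k] [IsAlgClosed k] [CharZero k] {n d : ℕ} (hd : 1 ≤ d)
    (a b : Fin n → k)
    (Λ : Module.Dual k (MvPolynomial (Fin n) k))
    (hfin : FiniteDimensional k (MvPolynomial (Fin n) k ⧸ hankelKer Λ))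
    (Γ : Module.Dual k (MvPolynomial (Fin n) k))
    (hΓperp : ∀ f ∈ hankelKer Λ, Γ f = 0)
    (hΓ : Γ = evalDual a + (d : k)⁻¹ •
        ∑ i, (b i - a i) • (evalDual a ∘ₗ (pderiv i).toLinearMap)) :
    (∀ j, Mt (X j) Γ = a j • Γ + ((b j - a j) / (d : k)) • evalDual a) ∧
    (∀ j, b j = a j → Mt (X j) Γ = a j • Γ) ∧
    (∀ j, b j ≠ a j →
      Mt (X j) Γ - a j • Γ ≠ 0 ∧
      (Mt (X j) - a j • 1 : Module.End k (Module.Dual k (MvPolynomial (Fin n) k))) (Mt (X j) Γ - a j • Γ) = 0 ∧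
      ∃ c : k, c ≠ 0 ∧ Mt (X j) Γ - a j • Γ = c • evalDual a) := by
  have hd0 : (d : k) ≠ 0 := Nat.cast_ne_zero.mpr (by omega)
  have key := key_aux hd a b Γ hΓ
  refine ⟨key, fun j hj => by rw [key j, hj]; simp, fun j hj => ?_⟩
  have hsub : Mt (X j) Γ - a j • Γ = ((b j - a j) / (d : k)) • evalDual a := by
    rw [key j]; abel
  have hc : (b j - a j) / (d : k) ≠ 0 :=
    div_ne_zero (sub_ne_zero.mpr hj) hd0
  refine ⟨?_, ?_, (b j - a j) / (d : k), hc, hsub⟩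
  · rw [hsub]
    intro h
    have := congrArg (fun φ => φ (1 : MvPolynomial (Fin n) k)) h
    simp [evalDual, hc] at this
  · rw [hsub]
    simp only [LinearMap.sub_apply, LinearMap.smul_apply, Module.End.one_apply, map_smul]
    rw [Mt_evalDual_aux]
    simp

end
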